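/- Any continuous linear functional λ on ℓ∞ vanishing on ℓ¹ defines a trace on the Lie algebra 𝔤: the map X ↦ λ((X_{nn})_{n}) applied to the bounded sequence of diagonal matrix entries satisfies λ([X,Y]_diag) = 0 for all X,Y ∈ 𝔤, i.e. it vanishes on commutators. -/

import Mathlib

noncomputable section

open scoped ENNReal

/-- The Hilbert space `ℓ²(ℤ, ℂ)` with orthonormal basis `(e n)_{n ∈ ℤ}`. -/
abbrev H : Type := lp (fun _ : ℤ => ℂ) 2

/-- The standard orthonormal basis vectors. -/
def e (n : ℤ) : H := lp.single 2 n (1 : ℂ)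

lemma norm_e (n : ℤ) : ‖e n‖ = 1 := by
  rw [show e n = lp.single 2 n ((fun _ : ℤ => (1 : ℂ)) n) from rfl,
    lp.norm_single (E := fun _ : ℤ => ℂ) (p := 2) (by norm_num) n]
  simp

/-- The matrix entry `⟨e i, X (e j)⟩` of a bounded operator. -/
def entry (X : H →L[ℂ] H) (i j : ℤ) : ℂ := inner ℂ (e i) (X (e j))

/-- Membership in `𝔤`: bounded operators `X` with `[D, X]` Hilbert–Schmidt,
where `D e_n = n e_n`, i.e. `Σ |(i-j) X_{ij}|² < ∞`. -/
def InG (X : H →L[ℂ] H) : Prop :=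
  Summable (fun p : ℤ × ℤ => ‖((p.1 : ℂ) - (p.2 : ℂ)) * entry X p.1 p.2‖ ^ 2)

/-- The bounded sequence of diagonal matrix entries of a bounded operator,
as an element of `ℓ∞(ℤ, ℂ)`. -/
def diag (X : H →L[ℂ] H) : lp (fun _ : ℤ => ℂ) ⊤ :=
  ⟨fun n => entry X n n, by
    apply memℓp_infty
    refine ⟨‖X‖, ?_⟩
    rintro - ⟨n, rfl⟩
    calc ‖entry X n n‖ ≤ ‖e n‖ * ‖X (e n)‖ := norm_inner_le_norm _ _
      _ ≤ ‖e n‖ * (‖X‖ * ‖e n‖) := by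
          gcongr; exact X.le_opNorm _
      _ = ‖X‖ := by rw [norm_e]; ring⟩

/-- The Hilbert basis of `H` given by the `e n`. -/
def hb : HilbertBasis ℤ ℂ H := ⟨LinearIsometryEquiv.refl ℂ H⟩

lemma hb_apply (n : ℤ) : hb n = e n := by
  rw [← HilbertBasis.repr_symm_single]
  rfl

lemma hasSum_entry_mul (X Y : H →L[ℂ] H) (n : ℤ) :
    HasSum (fun k => entry X n k * entry Y k n) (entry (X * Y) n n) := by
  have h := hb.hasSum_inner_mul_inner (ContinuousLinearMap.adjoint X (e n)) (Y (e n))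
  simp only [hb_apply, ContinuousLinearMap.adjoint_inner_left] at h
  simpa only [entry, ContinuousLinearMap.mul_apply] using h

/-- off-diagonal entry bound for elements of `𝔤`. -/
lemma norm_entry_le {n k : ℤ} (X : H →L[ℂ] H) (h : n ≠ k) :
    ‖entry X n k‖ ≤ ‖((n : ℂ) - (k : ℂ)) * entry X n k‖ := by
  rw [norm_mul]
  have h1 : (1 : ℝ) ≤ ‖((n : ℂ) - (k : ℂ))‖ := by
    have : ((n : ℂ) - (k : ℂ)) = ((n - k : ℤ) : ℂ) := by push_cast; ring
    rw [this, Complex.norm_intCast]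
    exact_mod_cast Int.one_le_abs (sub_ne_zero.mpr h)
  nlinarith [norm_nonneg (entry X n k)]

set_option maxHeartbeats 1000000 in
/-- Any continuous linear functional `Λ` on `ℓ∞` vanishing on `ℓ¹` defines a trace
on the Lie algebra `𝔤`: applied to the diagonal sequence of a commutator of two
elements of `𝔤` it gives zero. -/
theorem generalized_limit_is_trace (Λ : lp (fun _ : ℤ => ℂ) ⊤ →L[ℂ] ℂ)
    (hΛ : ∀ f : lp (fun _ : ℤ => ℂ) ⊤, Summable (fun n => ‖f n‖) → Λ f = 0)
    (X Y : H →L[ℂ] H) (hX : InG X) (hY : InG Y) :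
    Λ (diag (X * Y - Y * X)) = 0 := by
  apply hΛ
  set u : ℤ × ℤ → ℝ := fun p => ‖((p.1 : ℂ) - (p.2 : ℂ)) * entry X p.1 p.2‖ with hu
  set v : ℤ × ℤ → ℝ := fun p => ‖((p.1 : ℂ) - (p.2 : ℂ)) * entry Y p.1 p.2‖ with hv
  have husq : Summable (fun p => u p ^ 2) := hX
  have hvsq : Summable (fun p => v p ^ 2) := hY
  have hvswapsq : Summable (fun p : ℤ × ℤ => v p.swap ^ 2) :=
    ((Equiv.prodComm ℤ ℤ).summable_iff).mpr hY
  have huswapsq : Summable (fun p : ℤ × ℤ => u p.swap ^ 2) :=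
    ((Equiv.prodComm ℤ ℤ).summable_iff).mpr hX
  set g : ℤ × ℤ → ℝ := fun p => u p * v p.swap + v p * u p.swap with hgdef
  have hg : Summable g := by
    apply Summable.add
    · refine Summable.of_nonneg_of_le
        (fun p => mul_nonneg (norm_nonneg _) (norm_nonneg _)) (fun p => ?_)
        ((husq.add hvswapsq).div_const 2)
      have := two_mul_le_add_sq (u p) (v p.swap)
      linarith
    · refine Summable.of_nonneg_of_le
        (fun p => mul_nonneg (norm_nonneg _) (norm_nonneg _)) (fun p => ?_)
        ((hvsq.add huswapsq).div_const 2)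
      have := two_mul_le_add_sq (v p) (u p.swap)
      linarith
  have hg0 : ∀ p, 0 ≤ g p := fun p =>
    add_nonneg (mul_nonneg (norm_nonneg _) (norm_nonneg _))
      (mul_nonneg (norm_nonneg _) (norm_nonneg _))
  set f : ℤ → ℤ → ℂ := fun n k => entry X n k * entry Y k n - entry Y n k * entry X k n
    with hfdef
  have key : ∀ n k, ‖f n k‖ ≤ g (n, k) := by
    intro n k
    rcases eq_or_ne n k with rfl | hnk
    · have : f n n = 0 := by simp [hfdef, mul_comm]
      rw [this, norm_zero]; exact hg0 _
    · calc ‖f n k‖ ≤ ‖entry X n k * entry Y k n‖ + ‖entry Y n k * entry X k n‖ :=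
            norm_sub_le _ _
        _ = ‖entry X n k‖ * ‖entry Y k n‖ + ‖entry Y n k‖ * ‖entry X k n‖ := by
            rw [norm_mul, norm_mul]
        _ ≤ u (n, k) * v (k, n) + v (n, k) * u (k, n) := by
            gcongr
            · exact norm_entry_le X hnk
            · exact norm_entry_le Y hnk.symm
            · exact norm_entry_le Y hnk
            · exact norm_entry_le X hnk.symm
        _ = g (n, k) := rfl
  have hfn : ∀ n, Summable (fun k => ‖f n k‖) := fun n =>
    Summable.of_nonneg_of_le (fun k => norm_nonneg _) (fun k => key n k)
      (hg.prod_factor n)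
  have hgsum : Summable (fun n => ∑' k, g (n, k)) :=
    ((summable_prod_of_nonneg hg0).mp hg).2
  have hdiag : ∀ n, diag (X * Y - Y * X) n = ∑' k, f n k := by
    intro n
    have h1 : HasSum (f n) (entry (X * Y) n n - entry (Y * X) n n) :=
      (hasSum_entry_mul X Y n).sub (hasSum_entry_mul Y X n)
    have h2 : diag (X * Y - Y * X) n = entry (X * Y) n n - entry (Y * X) n n := by
      show entry (X * Y - Y * X) n n = _
      simp only [entry, ContinuousLinearMap.sub_apply, inner_sub_right]
    rw [h2, ← h1.tsum_eq]
  refine Summable.of_nonneg_of_le (fun n => norm_nonneg _) (fun n => ?_) hgsum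
  rw [hdiag n]
  calc ‖∑' k, f n k‖ ≤ ∑' k, ‖f n k‖ := norm_tsum_le_tsum_norm (hfn n)
    _ ≤ ∑' k, g (n, k) := Summable.tsum_le_tsum (fun k => key n k) (hfn n) (hg.prod_factor n)
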